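/- arXiv:1201.1992 — 2 statements merged into one kernel-verified Lean document; each statement's English description precedes it below -/
import Mathlib

section
/- Every rational pseudodifferential operator over a differential field K of characteristic zero can be written as a right fraction A S⁻¹ with A, S ∈ K[∂], S ≠ 0; in other words, the set {A S⁻¹ : A, S ∈ K[∂], S ≠ 0} is a subskewfield of K((∂⁻¹)) and equals the smallest subskewfield of K((∂⁻¹)) containing K[∂]. -/
/-- An axiomatization of the ring `R((∂⁻¹))` of pseudodifferential operators over a
commutative differential ring `(R, δ)`: elements are determined by their coefficients
`coeff A : ℤ → R` (supported in a half-line `n ≤ N`), with the product determined by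
`∂ⁿ ∘ a = Σ_{j≥0} binom(n,j) δʲ(a) ∂^{n-j}`, equivalently by the symbol formula
`coeff (A∘B) k = Σ_{m+n-j=k} binom(m,j) aₘ δʲ(bₙ)`. -/
structure PseudoDiffOps (R : Type) [CommRing R] (δ : R → R) : Type 1 where
  carrier : Type
  [ringCarrier : Ring carrier]
  /-- the embedding of `R` as the operators of order `≤ 0` with only a constant term -/
  const : R →+* carrier
  /-- the derivation `∂` as an element of the ring -/
  d : carrier
  /-- the element `∂⁻¹` -/
  dinv : carrier
  δ_add : ∀ a b : R, δ (a + b) = δ a + δ b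
  δ_leibniz : ∀ a b : R, δ (a * b) = δ a * b + a * δ b
  /-- `coeff A n` is the coefficient of `∂ⁿ` in `A` -/
  coeff : carrier → ℤ → R
  coeff_injective : Function.Injective coeff
  coeff_add : ∀ A B n, coeff (A + B) n = coeff A n + coeff B n
  coeff_one : ∀ n, coeff 1 n = if n = 0 then 1 else 0
  coeff_const : ∀ (a : R) (n), coeff (const a) n = if n = 0 then a else 0
  coeff_d : ∀ n, coeff d n = if n = 1 then 1 else 0
  coeff_dinv : ∀ n, coeff dinv n = if n = -1 then 1 else 0
  d_dinv : d * dinv = 1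
  dinv_d : dinv * d = 1
  coeff_bddAbove : ∀ A, ∃ N : ℤ, ∀ n, N < n → coeff A n = 0
  exists_of_coeffs : ∀ f : ℤ → R, (∃ N : ℤ, ∀ n, N < n → f n = 0) → ∃ A, coeff A = f
  coeff_mul : ∀ (A B : carrier) (NA NB k : ℤ),
    (∀ n, NA < n → coeff A n = 0) → (∀ n, NB < n → coeff B n = 0) →
    coeff (A * B) k =
      ∑ m ∈ Finset.Icc (k - NB) NA, ∑ j ∈ Finset.range ((NB - k + m).toNat + 1),
        ((Ring.choose m j : ℤ) : R) * (coeff A m * δ^[j] (coeff B (k + j - m)))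

attribute [instance] PseudoDiffOps.ringCarrier

namespace PseudoDiffOps

variable {R : Type} [CommRing R] {δ : R → R} (P : PseudoDiffOps R δ)

/-- the order of a pseudodifferential operator: the largest `n` with `coeff A n ≠ 0`
(junk value for `A = 0`). -/
noncomputable def ord (A : P.carrier) : ℤ := sSup {n : ℤ | P.coeff A n ≠ 0}

/-- the leading coefficient of a pseudodifferential operator -/
noncomputable def leadCoeff (A : P.carrier) : R := P.coeff A (P.ord A)

/-- `A` is a differential operator, i.e. lies in `R[∂] ⊆ R((∂⁻¹))` -/
def IsDiffOp (A : P.carrier) : Prop := ∀ n : ℤ, n < 0 → P.coeff A n = 0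

/-- `A` is monic, i.e. has leading coefficient `1` -/
noncomputable def Monic (A : P.carrier) : Prop := P.leadCoeff A = 1

end PseudoDiffOps

/-- a subset of `K((∂⁻¹))` is a subskewfield if it is a subring closed under taking
inverses of its nonzero elements -/
def PseudoDiffOps.IsSubskewfield {K : Type} [CommRing K] {δ : K → K}
    (P : PseudoDiffOps K δ) (S : Set P.carrier) : Prop :=
  (0 : P.carrier) ∈ S ∧ (1 : P.carrier) ∈ S ∧
  (∀ x ∈ S, ∀ y ∈ S, x + y ∈ S) ∧ (∀ x ∈ S, -x ∈ S) ∧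
  (∀ x ∈ S, ∀ y ∈ S, x * y ∈ S) ∧
  (∀ x ∈ S, x ≠ 0 → ∃ y ∈ S, x * y = 1 ∧ y * x = 1)

/-- the set of right fractions `A S⁻¹` with `A, S ∈ K[∂]`, `S ≠ 0` -/
noncomputable def PseudoDiffOps.rightFractions {K : Type} [CommRing K] {δ : K → K}
    (P : PseudoDiffOps K δ) : Set P.carrier :=
  {x : P.carrier | ∃ A S : P.carrier,
    P.IsDiffOp A ∧ P.IsDiffOp S ∧ S ≠ 0 ∧ x = A * Ring.inverse S}


/-! ## Auxiliary development -/

namespace PseudoDiffOps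

variable {R : Type} [CommRing R] {δ : R → R} (P : PseudoDiffOps R δ)

/-! ### basic coefficient lemmas -/

lemma coeff_zero (n : ℤ) : P.coeff 0 n = 0 := by
  have h := P.coeff_add 0 0 n
  rw [add_zero] at h
  exact (left_eq_add.mp h)

lemma coeff_neg (A : P.carrier) (n : ℤ) : P.coeff (-A) n = - P.coeff A n := by
  have h := P.coeff_add A (-A) n
  rw [add_neg_cancel, P.coeff_zero] at h
  linear_combination -h

lemma eq_zero_of_coeff (A : P.carrier) (h : ∀ n, P.coeff A n = 0) : A = 0 :=
  P.coeff_injective (by funext n; rw [h, P.coeff_zero])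

lemma exists_coeff_ne_zero {A : P.carrier} (h : A ≠ 0) : ∃ n, P.coeff A n ≠ 0 := by
  by_contra hc
  push_neg at hc
  exact h (P.eq_zero_of_coeff A hc)

/-- `A` has order exactly `N` -/
def OrdAt (A : P.carrier) (N : ℤ) : Prop :=
  P.coeff A N ≠ 0 ∧ ∀ n, N < n → P.coeff A n = 0

lemma exists_ordAt {A : P.carrier} (h : A ≠ 0) : ∃ N, P.OrdAt A N := by
  obtain ⟨b, hb⟩ := P.coeff_bddAbove A
  obtain ⟨N, hN, hN'⟩ := Int.exists_greatest_of_bdd (P := fun n => P.coeff A n ≠ 0)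
    ⟨b, fun z hz => by by_contra hc; exact hz (hb z (by omega))⟩ (P.exists_coeff_ne_zero h)
  exact ⟨N, hN, fun n hn => by by_contra hc; exact absurd (hN' n hc) (by omega)⟩

include P in
lemma δ_zero : δ (0 : R) = 0 := by
  have h := P.δ_add 0 0
  rw [add_zero] at h
  exact (left_eq_add.mp h)

include P in
lemma δ_iterate_zero (j : ℕ) : δ^[j] (0 : R) = 0 := by
  induction j with
  | zero => rfl
  | succ j ih => rw [Function.iterate_succ_apply', ih, P.δ_zero]

include P in
lemma δ_one : δ (1 : R) = 0 := by
  have h := P.δ_leibniz 1 1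
  rw [mul_one, one_mul] at h
  have : δ (1:R) = δ 1 + δ 1 := by simpa using h
  exact (left_eq_add.mp this)

include P in
lemma δ_iterate_one (j : ℕ) (hj : j ≠ 0) : δ^[j] (1 : R) = 0 := by
  obtain ⟨j, rfl⟩ := Nat.exists_eq_succ_of_ne_zero hj
  rw [Function.iterate_succ_apply, P.δ_one, P.δ_iterate_zero]

lemma choose_int_eq_zero {m : ℤ} {j : ℕ} (hm : 0 ≤ m) (hj : m < j) :
    ((Ring.choose m j : ℤ) : R) = 0 := by
  lift m to ℕ using hm
  rw [Ring.choose_natCast]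
  simp [Nat.choose_eq_zero_of_lt (by exact_mod_cast hj)]


/-! ### multiplication lemmas -/

lemma coeff_mul_top {A B : P.carrier} {M N : ℤ}
    (hA : ∀ n, M < n → P.coeff A n = 0) (hB : ∀ n, N < n → P.coeff B n = 0) :
    P.coeff (A * B) (M + N) = P.coeff A M * P.coeff B N := by
  rw [P.coeff_mul A B M N (M + N) hA hB]
  have h1 : M + N - N = M := by ring
  rw [h1, Finset.Icc_self, Finset.sum_singleton]
  have h2 : (N - (M + N) + M).toNat = 0 := by omega
  rw [h2, Finset.sum_range_one]
  rw [Ring.choose_zero_right]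
  push_cast
  have h3 : M + N + 0 - M = N := by ring
  rw [h3]
  simp

lemma coeff_mul_eq_zero_of_gt {A B : P.carrier} {M N : ℤ}
    (hA : ∀ n, M < n → P.coeff A n = 0) (hB : ∀ n, N < n → P.coeff B n = 0)
    {k : ℤ} (hk : M + N < k) : P.coeff (A * B) k = 0 := by
  rw [P.coeff_mul A B M N k hA hB, Finset.Icc_eq_empty (by omega), Finset.sum_empty]

/-! ### differential operators -/

lemma isDiffOp_zero : P.IsDiffOp 0 := fun n _ => P.coeff_zero n

lemma isDiffOp_one : P.IsDiffOp 1 := fun n hn => by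
  rw [P.coeff_one]; simp; omega

lemma isDiffOp_const (a : R) : P.IsDiffOp (P.const a) := fun n hn => by
  rw [P.coeff_const]; simp; omega

lemma isDiffOp_d : P.IsDiffOp P.d := fun n hn => by
  rw [P.coeff_d]; simp; omega

lemma isDiffOp_add {A B : P.carrier} (hA : P.IsDiffOp A) (hB : P.IsDiffOp B) :
    P.IsDiffOp (A + B) := fun n hn => by rw [P.coeff_add, hA n hn, hB n hn, add_zero]

lemma isDiffOp_neg {A : P.carrier} (hA : P.IsDiffOp A) : P.IsDiffOp (-A) :=
  fun n hn => by rw [P.coeff_neg, hA n hn, neg_zero]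

lemma isDiffOp_mul {A B : P.carrier} (hA : P.IsDiffOp A) (hB : P.IsDiffOp B) :
    P.IsDiffOp (A * B) := by
  intro k hk
  obtain ⟨NA₀, hNA₀⟩ := P.coeff_bddAbove A
  obtain ⟨NB₀, hNB₀⟩ := P.coeff_bddAbove B
  set NA := max NA₀ 0 with hNA
  set NB := max NB₀ 0 with hNB
  rw [P.coeff_mul A B NA NB k (fun n hn => hNA₀ n (by omega)) (fun n hn => hNB₀ n (by omega))]
  apply Finset.sum_eq_zero
  intro m hm
  apply Finset.sum_eq_zero
  intro j hj
  rcases lt_or_ge m 0 with hm0 | hm0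
  · rw [hA m hm0]; ring
  · rcases lt_or_ge (j : ℤ) (m - k) with hjm | hjm
    · rw [hB (k + j - m) (by omega), P.δ_iterate_zero]; ring
    · rw [choose_int_eq_zero hm0 (by omega)]; ring


lemma coeff_sub (A B : P.carrier) (n : ℤ) :
    P.coeff (A - B) n = P.coeff A n - P.coeff B n := by
  rw [sub_eq_add_neg, P.coeff_add, P.coeff_neg, sub_eq_add_neg]

lemma isDiffOp_sub {A B : P.carrier} (hA : P.IsDiffOp A) (hB : P.IsDiffOp B) :
    P.IsDiffOp (A - B) := by
  rw [sub_eq_add_neg]; exact P.isDiffOp_add hA (P.isDiffOp_neg hB)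

lemma isDiffOp_d_pow (k : ℕ) : P.IsDiffOp (P.d ^ k) := by
  induction k with
  | zero => rw [pow_zero]; exact P.isDiffOp_one
  | succ k ih => rw [pow_succ]; exact P.isDiffOp_mul ih P.isDiffOp_d

lemma d_pow_spec (k : ℕ) :
    P.coeff (P.d ^ k) k = 1 ∧ ∀ n, (k : ℤ) < n → P.coeff (P.d ^ k) n = 0 := by
  induction k with
  | zero =>
    rw [pow_zero]
    exact ⟨by rw [P.coeff_one]; simp, fun n hn => by rw [P.coeff_one]; simp; omega⟩
  | succ k ih =>
    have hd : ∀ n, (1 : ℤ) < n → P.coeff P.d n = 0 := fun n hn => by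
      rw [P.coeff_d]; simp; omega
    constructor
    · rw [pow_succ]
      have := P.coeff_mul_top ih.2 hd
      rw [ih.1, P.coeff_d] at this
      simp only [Nat.cast_succ]
      convert this using 2
      simp
    · intro n hn
      rw [pow_succ]
      exact P.coeff_mul_eq_zero_of_gt ih.2 hd (by push_cast at hn ⊢; omega)

lemma mon_spec (k : ℕ) (c : R) :
    P.coeff (P.d ^ k * P.const c) k = c ∧
      ∀ n, (k : ℤ) < n → P.coeff (P.d ^ k * P.const c) n = 0 := by
  have hc : ∀ n, (0 : ℤ) < n → P.coeff (P.const c) n = 0 := fun n hn => by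
    rw [P.coeff_const]; simp; omega
  constructor
  · have := P.coeff_mul_top (P.d_pow_spec k).2 hc
    rw [(P.d_pow_spec k).1, P.coeff_const] at this
    simpa using this
  · intro n hn
    exact P.coeff_mul_eq_zero_of_gt (P.d_pow_spec k).2 hc (by omega)

lemma isDiffOp_mon (k : ℕ) (c : R) : P.IsDiffOp (P.d ^ k * P.const c) :=
  P.isDiffOp_mul (P.isDiffOp_d_pow k) (P.isDiffOp_const c)

end PseudoDiffOps

namespace PseudoDiffOps

section FieldLemmas

variable {K : Type} [Field K] {δ : K → K} (P : PseudoDiffOps K δ)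

lemma one_ne_zero' : (1 : P.carrier) ≠ 0 := fun h => by
  have h0 := P.coeff_zero 0
  rw [← h, P.coeff_one] at h0
  simp at h0

lemma ordAt_mul {A B : P.carrier} {M N : ℤ} (hA : P.OrdAt A M) (hB : P.OrdAt B N) :
    P.OrdAt (A * B) (M + N) :=
  ⟨by rw [P.coeff_mul_top hA.2 hB.2]; exact mul_ne_zero hA.1 hB.1,
   fun k hk => P.coeff_mul_eq_zero_of_gt hA.2 hB.2 hk⟩

lemma mul_ne_zero' {A B : P.carrier} (hA : A ≠ 0) (hB : B ≠ 0) : A * B ≠ 0 := by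
  obtain ⟨M, hM⟩ := P.exists_ordAt hA
  obtain ⟨N, hN⟩ := P.exists_ordAt hB
  intro h
  exact (P.ordAt_mul hM hN).1 (by rw [h, P.coeff_zero])

lemma division {B : P.carrier} (hB : P.IsDiffOp B) {NB : ℤ} (hNB : P.OrdAt B NB) :
    ∀ (n : ℕ) (S : P.carrier), P.IsDiffOp S → (S = 0 ∨ ∃ NS, P.OrdAt S NS ∧ NS < n) →
    ∃ Q Rr, P.IsDiffOp Q ∧ P.IsDiffOp Rr ∧ S = B * Q + Rr ∧
      (Rr = 0 ∨ ∃ NR, P.OrdAt Rr NR ∧ NR < NB) := by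
  intro n
  induction n with
  | zero =>
    intro S hS h
    rcases h with rfl | ⟨NS, hNS, h0⟩
    · exact ⟨0, 0, P.isDiffOp_zero, P.isDiffOp_zero, by simp, Or.inl rfl⟩
    · exact absurd (hS NS (by omega)) hNS.1
  | succ n ih =>
    intro S hS h
    rcases h with rfl | ⟨NS, hNS, hlt⟩
    · exact ⟨0, 0, P.isDiffOp_zero, P.isDiffOp_zero, by simp, Or.inl rfl⟩
    rcases lt_or_ge NS NB with hcase | hcase
    · exact ⟨0, S, P.isDiffOp_zero, hS, by simp, Or.inr ⟨NS, hNS, hcase⟩⟩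
    · have hNB0 : 0 ≤ NB := by
        by_contra h'
        exact hNB.1 (hB NB (by omega))
      have hNS0 : 0 ≤ NS := le_trans hNB0 hcase
      set c : K := (P.coeff B NB)⁻¹ * P.coeff S NS with hc
      set k : ℕ := (NS - NB).toNat with hk
      set M : P.carrier := P.d ^ k * P.const c with hM
      have hMd : P.IsDiffOp M := P.isDiffOp_mon k c
      have hmon := P.mon_spec k c
      have hNBk : NB + (k : ℤ) = NS := by omega
      have hBM_top : P.coeff (B * M) NS = P.coeff S NS := by
        have := P.coeff_mul_top hNB.2 hmon.2
        rw [hNBk, hmon.1] at this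
        rw [this, hc, ← mul_assoc, mul_inv_cancel₀ hNB.1, one_mul]
      have hBM_bd : ∀ x, NS < x → P.coeff (B * M) x = 0 := fun x hx =>
        P.coeff_mul_eq_zero_of_gt hNB.2 hmon.2 (by omega)
      set S' : P.carrier := S - B * M with hS'
      have hS'd : P.IsDiffOp S' := P.isDiffOp_sub hS (P.isDiffOp_mul hB hMd)
      have hS'bd : ∀ x, NS ≤ x → P.coeff S' x = 0 := by
        intro x hx
        rw [hS', P.coeff_sub]
        rcases eq_or_lt_of_le hx with rfl | hx'
        · rw [hBM_top]; ring
        · rw [hBM_bd x hx', hNS.2 x hx']; ring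
      have hprec : S' = 0 ∨ ∃ N', P.OrdAt S' N' ∧ N' < n := by
        rcases eq_or_ne S' 0 with h0 | h0
        · exact Or.inl h0
        · obtain ⟨N', hN'⟩ := P.exists_ordAt h0
          have : N' < NS := by
            by_contra h''
            push_neg at h''
            exact hN'.1 (hS'bd N' h'')
          exact Or.inr ⟨N', hN', by omega⟩
      obtain ⟨Q₁, Rr, hQ₁, hRr, hEq, hRlt⟩ := ih S' hS'd hprec
      refine ⟨M + Q₁, Rr, P.isDiffOp_add hMd hQ₁, hRr, ?_, hRlt⟩
      have h2 : S = B * M + (B * Q₁ + Rr) := by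
        rw [← hEq, hS']; abel
      rw [h2, mul_add]; abel

lemma ore_aux : ∀ (n : ℕ) (S B : P.carrier), P.IsDiffOp S → P.IsDiffOp B → S ≠ 0 → B ≠ 0 →
    (∃ NB, P.OrdAt B NB ∧ NB < n) →
    ∃ C D, P.IsDiffOp C ∧ P.IsDiffOp D ∧ C ≠ 0 ∧ S * C = B * D := by
  intro n
  induction n with
  | zero =>
    rintro S B _ hB _ hB0 ⟨NB, hNB, h⟩
    exact absurd (hB NB (by omega)) hNB.1
  | succ n ih =>
    rintro S B hS hB hS0 hB0 ⟨NB, hNB, hlt⟩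
    obtain ⟨NS, hNS⟩ := P.exists_ordAt hS0
    obtain ⟨Q, Rr, hQ, hRr, hEq, hRlt⟩ :=
      P.division hB hNB (NS.toNat + 1) S hS (Or.inr ⟨NS, hNS, by omega⟩)
    rcases hRlt with rfl | ⟨NR, hNR, hNRlt⟩
    · have hQ0 : Q ≠ 0 := by
        rintro rfl
        rw [mul_zero, add_zero] at hEq
        exact hS0 hEq
      exact ⟨1, Q, P.isDiffOp_one, hQ, P.one_ne_zero', by rw [mul_one, hEq, add_zero]⟩
    · have hR0 : Rr ≠ 0 := fun h => by rw [h] at hNR; exact hNR.1 (P.coeff_zero _)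
      obtain ⟨C₁, D₁, hC₁, hD₁, hC₁0, hEq₁⟩ := ih B Rr hB hRr hB0 hR0 ⟨NR, hNR, by omega⟩
      have hD₁0 : D₁ ≠ 0 := by
        rintro rfl
        rw [mul_zero] at hEq₁
        exact P.mul_ne_zero' hB0 hC₁0 hEq₁
      refine ⟨D₁, Q * D₁ + C₁, hD₁, P.isDiffOp_add (P.isDiffOp_mul hQ hD₁) hC₁, hD₁0, ?_⟩
      rw [hEq, add_mul, ← hEq₁, mul_add, mul_assoc]

lemma ore {S B : P.carrier} (hS : P.IsDiffOp S) (hB : P.IsDiffOp B)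
    (hS0 : S ≠ 0) (hB0 : B ≠ 0) :
    ∃ C D, P.IsDiffOp C ∧ P.IsDiffOp D ∧ C ≠ 0 ∧ S * C = B * D := by
  obtain ⟨NB, hNB⟩ := P.exists_ordAt hB0
  exact P.ore_aux (NB.toNat + 1) S B hS hB hS0 hB0 ⟨NB, hNB, by omega⟩

end FieldLemmas


noncomputable def invAux {K : Type} [Field K] (δ : K → K) (s : ℤ → K) (N : ℤ) : ℕ → K
  | r =>
    (s N)⁻¹ * ((if r = 0 then 1 else 0)
      - ∑ m ∈ (Finset.Icc (N - (r : ℤ)) (N - 1)).attach,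
          ∑ j ∈ Finset.range (((m : ℤ) - N + r).toNat + 1),
            ((Ring.choose (m : ℤ) j : ℤ) : K) *
              (s m * δ^[j] (invAux δ s N ((r : ℤ) + m - N - j).toNat))
      - ∑ j ∈ (Finset.Icc 1 r).attach,
          ((Ring.choose N (j : ℕ) : ℤ) : K) * (s N * δ^[(j : ℕ)] (invAux δ s N (r - (j : ℕ)))))
  termination_by r => r
  decreasing_by
  · have hm := m.2
    simp only [Finset.mem_Icc] at hm
    omega
  · have hj := j.2
    simp only [Finset.mem_Icc] at hj
    omega

lemma invAux_spec {K : Type} [Field K] (δ : K → K) (s : ℤ → K) (N : ℤ) (hs : s N ≠ 0) (r : ℕ) :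
    s N * invAux δ s N r = (if r = 0 then 1 else 0)
      - (∑ m ∈ Finset.Icc (N - (r : ℤ)) (N - 1),
          ∑ j ∈ Finset.range ((m - N + r).toNat + 1),
            ((Ring.choose m j : ℤ) : K) *
              (s m * δ^[j] (invAux δ s N ((r : ℤ) + m - N - j).toNat)))
      - (∑ j ∈ Finset.Icc 1 r,
          ((Ring.choose N j : ℤ) : K) * (s N * δ^[j] (invAux δ s N (r - j)))) := by
  conv_lhs => rw [invAux]
  rw [← mul_assoc, mul_inv_cancel₀ hs, one_mul]
  rw [← Finset.sum_attach (Finset.Icc (N - (r : ℤ)) (N - 1)), ← Finset.sum_attach (Finset.Icc 1 r)]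

section Inverse

variable {K : Type} [Field K] {δ : K → K} (P : PseudoDiffOps K δ)

lemma exists_right_inv {X : P.carrier} (hX : X ≠ 0) : ∃ Y, X * Y = 1 := by
  obtain ⟨N, hN⟩ := P.exists_ordAt hX
  set s : ℤ → K := P.coeff X with hs
  set f : ℤ → K := fun n => if -N < n then 0 else invAux δ s N (-N - n).toNat with hf
  obtain ⟨Y, hY⟩ := P.exists_of_coeffs f ⟨-N, fun n hn => by simp only [hf]; rw [if_pos hn]⟩
  have hYb : ∀ n, -N < n → P.coeff Y n = 0 := fun n hn => by
    rw [hY]; simp only [hf]; rw [if_pos hn]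
  refine ⟨Y, P.coeff_injective (funext fun k0 => ?_)⟩
  rw [P.coeff_mul X Y N (-N) k0 hN.2 hYb, P.coeff_one]
  rcases lt_or_ge 0 k0 with hk | hk
  · rw [Finset.Icc_eq_empty (by omega), Finset.sum_empty, if_neg (by omega)]
  · set r : ℕ := (-k0).toNat with hr
    have hk0 : k0 = -(r : ℤ) := by omega
    have hsplit : Finset.Icc (k0 - -N) N = insert N (Finset.Icc (N - (r : ℤ)) (N - 1)) := by
      ext x; simp only [Finset.mem_Icc, Finset.mem_insert]; omega
    rw [hsplit, Finset.sum_insert (by simp only [Finset.mem_Icc]; omega)]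
    have hrange : (-N - k0 + N).toNat + 1 = r + 1 := by omega
    rw [hrange]
    have hr01 : Finset.range (r + 1) = insert 0 (Finset.Icc 1 r) := by
      ext x; simp only [Finset.mem_Icc, Finset.mem_insert, Finset.mem_range]; omega
    rw [hr01, Finset.sum_insert (by simp)]
    have p1 : ((Ring.choose N 0 : ℤ) : K) * (P.coeff X N * δ^[0] (P.coeff Y (k0 + ((0:ℕ):ℤ) - N)))
        = s N * invAux δ s N r := by
      rw [Ring.choose_zero_right, hY]
      simp only [hf, Function.iterate_zero, id_eq, Int.cast_one, one_mul]
      rw [if_neg (by omega)]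
      congr 2
      omega
    have p2 : (∑ x ∈ Finset.Icc 1 r,
          ((Ring.choose N x : ℤ) : K) * (P.coeff X N * δ^[x] (P.coeff Y (k0 + (x:ℤ) - N))))
        = ∑ j ∈ Finset.Icc 1 r,
          ((Ring.choose N j : ℤ) : K) * (s N * δ^[j] (invAux δ s N (r - j))) := by
      refine Finset.sum_congr rfl fun j hj => ?_
      simp only [Finset.mem_Icc] at hj
      rw [hY]
      simp only [hf]
      rw [if_neg (by omega)]
      rw [show (-N - (k0 + (j:ℤ) - N)).toNat = r - j by omega]
    have p3 : (∑ x ∈ Finset.Icc (N - (r:ℤ)) (N - 1),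
          ∑ j ∈ Finset.range ((-N - k0 + x).toNat + 1),
            ((Ring.choose x j : ℤ) : K) * (P.coeff X x * δ^[j] (P.coeff Y (k0 + (j:ℤ) - x))))
        = ∑ m ∈ Finset.Icc (N - (r:ℤ)) (N - 1),
          ∑ j ∈ Finset.range ((m - N + r).toNat + 1),
            ((Ring.choose m j : ℤ) : K) *
              (s m * δ^[j] (invAux δ s N ((r : ℤ) + m - N - j).toNat)) := by
      refine Finset.sum_congr rfl fun m hm => ?_
      simp only [Finset.mem_Icc] at hm
      rw [show (-N - k0 + m).toNat = (m - N + (r:ℤ)).toNat by omega]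
      refine Finset.sum_congr rfl fun j hj => ?_
      simp only [Finset.mem_range] at hj
      rw [hY]
      simp only [hf]
      rw [if_neg (by omega)]
      rw [show (-N - (k0 + (j:ℤ) - m)).toNat = ((r:ℤ) + m - N - (j:ℤ)).toNat by omega]
    rw [p1, p2, p3, invAux_spec δ s N hN.1 r]
    simp only [
      show ((k0 = 0) ↔ (r = 0)) from by omega]
    ring

lemma exists_inv {X : P.carrier} (hX : X ≠ 0) : ∃ Y, X * Y = 1 ∧ Y * X = 1 := by
  obtain ⟨Y, hY⟩ := P.exists_right_inv hX
  have hY0 : Y ≠ 0 := by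
    rintro rfl
    rw [mul_zero] at hY
    exact P.one_ne_zero' hY.symm
  obtain ⟨Z, hZ⟩ := P.exists_right_inv hY0
  have hXZ : X = Z := by
    calc X = X * (Y * Z) := by rw [hZ, mul_one]
    _ = (X * Y) * Z := by rw [mul_assoc]
    _ = Z := by rw [hY, one_mul]
  exact ⟨Y, hY, by rw [hXZ, hZ]⟩

lemma isUnit_of_ne_zero {X : P.carrier} (hX : X ≠ 0) : IsUnit X := by
  obtain ⟨Y, h1, h2⟩ := P.exists_inv hX
  exact ⟨⟨X, Y, h1, h2⟩, rfl⟩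

lemma mul_inverse_cancel' {X : P.carrier} (hX : X ≠ 0) : X * Ring.inverse X = 1 :=
  Ring.mul_inverse_cancel X (P.isUnit_of_ne_zero hX)

lemma inverse_mul_cancel' {X : P.carrier} (hX : X ≠ 0) : Ring.inverse X * X = 1 :=
  Ring.inverse_mul_cancel X (P.isUnit_of_ne_zero hX)

lemma inv_mul_cancel_left' {X : P.carrier} (hX : X ≠ 0) (Z : P.carrier) :
    Ring.inverse X * (X * Z) = Z := by
  rw [← mul_assoc, P.inverse_mul_cancel' hX, one_mul]

lemma eq_mul_inverse_of_mul_eq {u z w : P.carrier} (hu : u ≠ 0) (h : z * u = w) :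
    z = w * Ring.inverse u := by
  rw [← h, mul_assoc, P.mul_inverse_cancel' hu, mul_one]

end Inverse
end PseudoDiffOps

/-- the set of right fractions `{A S⁻¹ : A, S ∈ K[∂], S ≠ 0}` is a
subskewfield of `K((∂⁻¹))` and equals the smallest subskewfield of `K((∂⁻¹))`
containing `K[∂]`; in particular every rational pseudodifferential operator is a
right fraction. -/
theorem rightFractions_eq_rationalPseudoDiffOps {K : Type} [Field K] [CharZero K]
    {δ : K → K} (P : PseudoDiffOps K δ) :
    P.IsSubskewfield P.rightFractions ∧
    {A : P.carrier | P.IsDiffOp A} ⊆ P.rightFractions ∧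
    (∀ T : Set P.carrier, P.IsSubskewfield T → {A : P.carrier | P.IsDiffOp A} ⊆ T →
      P.rightFractions ⊆ T) := by
  have h0mem : (0 : P.carrier) ∈ P.rightFractions :=
    ⟨0, 1, P.isDiffOp_zero, P.isDiffOp_one, P.one_ne_zero', (zero_mul _).symm⟩
  refine ⟨⟨h0mem, ?_, ?_, ?_, ?_, ?_⟩, ?_, ?_⟩
  · exact ⟨1, 1, P.isDiffOp_one, P.isDiffOp_one, P.one_ne_zero',
      by rw [Ring.inverse_one, mul_one]⟩
  · -- addition
    rintro x ⟨A, S, hA, hS, hS0, rfl⟩ y ⟨B, T, hB, hT, hT0, rfl⟩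
    obtain ⟨C, D, hC, hD, hC0, hCD⟩ := P.ore hS hT hS0 hT0
    have hD0 : D ≠ 0 := by
      rintro rfl
      rw [mul_zero] at hCD
      exact P.mul_ne_zero' hS0 hC0 hCD
    have hSC0 : S * C ≠ 0 := P.mul_ne_zero' hS0 hC0
    refine ⟨A * C + B * D, S * C,
      P.isDiffOp_add (P.isDiffOp_mul hA hC) (P.isDiffOp_mul hB hD),
      P.isDiffOp_mul hS hC, hSC0, ?_⟩
    refine P.eq_mul_inverse_of_mul_eq hSC0 ?_
    rw [add_mul]
    have e1 : A * Ring.inverse S * (S * C) = A * C := by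
      rw [mul_assoc, P.inv_mul_cancel_left' hS0]
    have e2 : B * Ring.inverse T * (S * C) = B * D := by
      rw [hCD, mul_assoc, P.inv_mul_cancel_left' hT0]
    rw [e1, e2]
  · -- negation
    rintro x ⟨A, S, hA, hS, hS0, rfl⟩
    exact ⟨-A, S, P.isDiffOp_neg hA, hS, hS0, by rw [neg_mul]⟩
  · -- multiplication
    rintro x ⟨A, S, hA, hS, hS0, rfl⟩ y ⟨B, T, hB, hT, hT0, rfl⟩
    rcases eq_or_ne B 0 with rfl | hB0
    · rw [zero_mul, mul_zero]
      exact h0mem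
    · obtain ⟨C, D, hC, hD, hC0, hBC⟩ := P.ore hB hS hB0 hS0
      have hTC0 : T * C ≠ 0 := P.mul_ne_zero' hT0 hC0
      refine ⟨A * D, T * C, P.isDiffOp_mul hA hD, P.isDiffOp_mul hT hC, hTC0, ?_⟩
      refine P.eq_mul_inverse_of_mul_eq hTC0 ?_
      simp only [mul_assoc]
      rw [P.inv_mul_cancel_left' hT0, hBC, P.inv_mul_cancel_left' hS0]
  · -- inverses
    rintro x ⟨A, S, hA, hS, hS0, rfl⟩ hx0
    have hA0 : A ≠ 0 := by
      rintro rfl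
      rw [zero_mul] at hx0
      exact hx0 rfl
    refine ⟨S * Ring.inverse A, ⟨S, A, hS, hA, hA0, rfl⟩, ?_, ?_⟩
    · simp only [mul_assoc]
      rw [P.inv_mul_cancel_left' hS0]
      exact P.mul_inverse_cancel' hA0
    · simp only [mul_assoc]
      rw [P.inv_mul_cancel_left' hA0]
      exact P.mul_inverse_cancel' hS0
  · -- diff ops are right fractions
    rintro A hA
    exact ⟨A, 1, hA, P.isDiffOp_one, P.one_ne_zero', by rw [Ring.inverse_one, mul_one]⟩
  · -- minimality
    rintro T ⟨hT0, hT1, hTadd, hTneg, hTmul, hTinv⟩ hTsub x ⟨A, S, hA, hS, hS0, rfl⟩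
    have hAT : A ∈ T := hTsub hA
    have hST : S ∈ T := hTsub hS
    obtain ⟨y, hyT, hy1, hy2⟩ := hTinv S hST hS0
    have hinv : Ring.inverse S = y := by
      rw [← P.inv_mul_cancel_left' hS0 y, hy1, mul_one]
    rw [hinv]
    exact hTmul A hAT y hyT
end

section
/- Let A = ℂ[a^{(n)}, b^{(n)}, d^{(n)} : n ∈ ℤ₊] / {ad − b²} be the differential domain obtained from the algebra of differential polynomials in a, b, d by quotienting by the differential ideal generated by ad − b². Then the element b a'/a of the fraction field of A (where a' = ∂a), i.e., the unique element x of Frac(A) with a·x = b·a', does not lie in A. -/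
open MvPolynomial

set_option maxHeartbeats 1000000
set_option synthInstance.maxHeartbeats 400000

/-- the algebra of differential polynomials `ℂ[a⁽ⁿ⁾, b⁽ⁿ⁾, d⁽ⁿ⁾ : n ∈ ℤ₊]`, with
`a⁽ⁿ⁾ = X (0, n)`, `b⁽ⁿ⁾ = X (1, n)`, `d⁽ⁿ⁾ = X (2, n)` -/
noncomputable abbrev DPoly3 : Type := MvPolynomial (Fin 3 × ℕ) ℂ

/-- the derivation `∂` sending `x⁽ⁿ⁾` to `x⁽ⁿ⁺¹⁾` for `x = a, b, d` -/
noncomputable def dpoly3Der : Derivation ℂ DPoly3 DPoly3 :=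
  MvPolynomial.mkDerivation ℂ (fun p : Fin 3 × ℕ => (X (p.1, p.2 + 1) : DPoly3))

/-- the differential ideal `{ad − b²}` generated by all `∂`-derivatives of `ad − b²` -/
noncomputable def diffIdeal3 : Ideal DPoly3 :=
  Ideal.span (Set.range fun n : ℕ =>
    (⇑dpoly3Der)^[n] (X ((0 : Fin 3), 0) * X ((2 : Fin 3), 0) - X ((1 : Fin 3), 0) ^ 2))

/-- the differential domain `A = ℂ[a⁽ⁿ⁾, b⁽ⁿ⁾, d⁽ⁿ⁾]/{ad − b²}` -/
noncomputable abbrev DDomain3 : Type := DPoly3 ⧸ diffIdeal3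

noncomputable section Aux

/-- target ring `(ℂ[ε]/ε²)[x]` -/
abbrev R3 : Type := Polynomial (DualNumber ℂ)

def pX : R3 := Polynomial.X

def eps3 : R3 := Polynomial.C DualNumber.eps

/-- values of the substitution at `a, b, d` -/
def V3 : Fin 3 → R3 := ![pX ^ 2, eps3 + pX ^ 2, eps3 * 2 + pX ^ 2]

/-- substitution: `x⁽ⁿ⁾ ↦ (d/dx)ⁿ (V3 x)` -/
def v3 : Fin 3 × ℕ → R3 := fun p => (⇑Polynomial.derivative)^[p.2] (V3 p.1)

def psi3 : DPoly3 →ₐ[ℂ] R3 := MvPolynomial.aeval v3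

lemma v3_succ (i : Fin 3 × ℕ) : v3 (i.1, i.2 + 1) = Polynomial.derivative (v3 i) := by
  simp [v3, Function.iterate_succ_apply']

lemma eps3_sq : eps3 * eps3 = 0 := by
  rw [eps3, ← map_mul, DualNumber.eps_mul_eps, map_zero]

lemma semiconj3 : Function.Semiconj (⇑psi3) (⇑dpoly3Der) (⇑Polynomial.derivative) := by
  intro f
  induction f using MvPolynomial.induction_on with
  | C a =>
      rw [show (C a : DPoly3) = algebraMap ℂ DPoly3 a from rfl, Derivation.map_algebraMap]
      rw [map_zero, AlgHom.commutes]
      rw [show algebraMap ℂ R3 a = Polynomial.C (algebraMap ℂ (DualNumber ℂ) a) from rfl]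
      rw [Polynomial.derivative_C]
  | add p q hp hq => simp only [map_add, hp, hq, Polynomial.derivative_add]
  | mul_X p i hp =>
      rw [Derivation.leibniz]
      have hx : dpoly3Der (X i : DPoly3) = X (i.1, i.2 + 1) :=
        MvPolynomial.mkDerivation_X ℂ _ i
      have hv : psi3 (X (i.1, i.2 + 1) : DPoly3) = Polynomial.derivative (v3 i) := by
        rw [psi3, MvPolynomial.aeval_X, v3_succ]
      have hvi : psi3 (X i : DPoly3) = v3 i := MvPolynomial.aeval_X _ _
      rw [smul_eq_mul, smul_eq_mul, map_add, map_mul, map_mul, hx, hv, hvi, hp,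
        map_mul, hvi, Polynomial.derivative_mul]
      ring

lemma key3 {S : Type} [CommRing S] (x e : S) (h : e * e = 0) :
    x ^ 2 * (e * 2 + x ^ 2) - (e + x ^ 2) ^ 2 = 0 := by linear_combination -h

lemma aeval_v3_ker : diffIdeal3 ≤ RingHom.ker psi3.toRingHom := by
  rw [diffIdeal3, Ideal.span_le]
  rintro _ ⟨n, rfl⟩
  have h0 : psi3 (X ((0 : Fin 3), 0) * X ((2 : Fin 3), 0) - X ((1 : Fin 3), 0) ^ 2 :
      DPoly3) = 0 := by
    rw [map_sub, map_mul, map_pow]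
    rw [show psi3 (X ((0:Fin 3),0) : DPoly3) = V3 0 from MvPolynomial.aeval_X _ _,
      show psi3 (X ((2:Fin 3),0) : DPoly3) = V3 2 from MvPolynomial.aeval_X _ _,
      show psi3 (X ((1:Fin 3),0) : DPoly3) = V3 1 from MvPolynomial.aeval_X _ _]
    exact key3 pX eps3 eps3_sq
  have := (semiconj3.iterate_right n).eq
  simp only [SetLike.mem_coe, RingHom.mem_ker, AlgHom.toRingHom_eq_coe, RingHom.coe_coe]
  rw [this _, h0, Function.iterate_fixed (map_zero _)]

/-- in the differential domain `A = ℂ[a⁽ⁿ⁾, b⁽ⁿ⁾, d⁽ⁿ⁾]/{ad − b²}`,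
the element `b a'/a` of `Frac(A)`, i.e. the unique `x ∈ Frac(A)` with `a·x = b·a'`,
does not lie in (the image of) `A`. -/
theorem ba'_div_a_not_mem : ∀ x : FractionRing DDomain3,
    algebraMap DDomain3 (FractionRing DDomain3)
        (Ideal.Quotient.mk diffIdeal3 (X ((0 : Fin 3), 0))) * x =
      algebraMap DDomain3 (FractionRing DDomain3)
        (Ideal.Quotient.mk diffIdeal3
          (X ((1 : Fin 3), 0) * dpoly3Der (X ((0 : Fin 3), 0)))) →
    x ∉ Set.range (algebraMap DDomain3 (FractionRing DDomain3)) := by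
  rintro x hx ⟨y, rfl⟩
  rw [← map_mul] at hx
  have h1 := IsFractionRing.injective DDomain3 (FractionRing DDomain3) hx
  obtain ⟨p, rfl⟩ := Ideal.Quotient.mk_surjective y
  rw [← map_mul, Ideal.Quotient.eq] at h1
  have h2 := aeval_v3_ker h1
  rw [RingHom.mem_ker] at h2
  have hx1 : dpoly3Der (X ((0:Fin 3),0) : DPoly3) = X ((0:Fin 3), 1) :=
    MvPolynomial.mkDerivation_X ℂ _ _
  change psi3 _ = 0 at h2
  rw [map_sub, map_mul, map_mul, hx1] at h2
  rw [show psi3 (X ((0:Fin 3),0) : DPoly3) = V3 0 from MvPolynomial.aeval_X _ _,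
    show psi3 (X ((1:Fin 3),0) : DPoly3) = V3 1 from MvPolynomial.aeval_X _ _,
    show psi3 (X ((0:Fin 3),1) : DPoly3) = Polynomial.derivative (V3 0) by
      rw [psi3, MvPolynomial.aeval_X]; rfl,
    sub_eq_zero] at h2
  -- h2 : V3 0 * psi3 p = V3 1 * derivative (V3 0)
  have h3 : (Polynomial.X : R3) ^ 2 * psi3 p =
      (eps3 + pX ^ 2) * Polynomial.derivative (pX ^ 2) := h2
  have hder : Polynomial.derivative (pX ^ 2) = Polynomial.C 2 * pX := by
    rw [pX, Polynomial.derivative_X_pow]; norm_num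
  have h4 : ((Polynomial.X : R3) ^ 2 * psi3 p).coeff 1 =
      ((eps3 + pX ^ 2) * (Polynomial.C 2 * pX)).coeff 1 := by rw [h3, hder]
  rw [Polynomial.X_pow_mul, Polynomial.coeff_mul_X_pow', if_neg (by norm_num)] at h4
  have h5 : ((eps3 + pX ^ 2) * (Polynomial.C 2 * pX)).coeff 1 = DualNumber.eps * 2 := by
    have hexp : ((eps3 + pX ^ 2) * (Polynomial.C 2 * pX) : R3)
        = Polynomial.C (DualNumber.eps * 2) * Polynomial.X
          + Polynomial.C 2 * Polynomial.X ^ 3 := by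
      rw [eps3, pX, Polynomial.C_mul]; ring
    rw [hexp, Polynomial.coeff_add, Polynomial.coeff_C_mul, Polynomial.coeff_C_mul,
      Polynomial.coeff_X_one, Polynomial.coeff_X_pow, if_neg (by norm_num)]
    ring
  rw [h5] at h4
  have h6 := congrArg TrivSqZeroExt.snd h4
  rw [TrivSqZeroExt.snd_mul, DualNumber.snd_eps, TrivSqZeroExt.snd_zero,
    show (2 : DualNumber ℂ) = 1 + 1 from by norm_num, TrivSqZeroExt.snd_add,
    TrivSqZeroExt.snd_one] at h6
  norm_num at h6
  rw [show (2 : DualNumber ℂ) = 1 + 1 from by norm_num, TrivSqZeroExt.fst_add,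
    TrivSqZeroExt.fst_one] at h6
  norm_num at h6

end Aux
end
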